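/- If a sequence of T time steps transforms the start configuration into the goal configuration of a GSTP instance on an m1 × m2 grid with k escorts, then T ≥ S / (k · max(m1, m2)), where S is the sum of Manhattan distances between each tile's start position and its goal position. -/

import Mathlib

/-- A cell of an `m₁ × m₂` grid. -/
abbrev Cell (m₁ m₂ : ℕ) := Fin m₁ × Fin m₂

/-- Manhattan (L1) distance between two cells. -/
def manhattan {m₁ m₂ : ℕ} (p q : Cell m₁ m₂) : ℕ :=
  ((p.1.val : ℤ) - (q.1.val : ℤ)).natAbs + ((p.2.val : ℤ) - (q.2.val : ℤ)).natAbs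

/-- The movement direction vector of tile `i` between configurations `c` and `c'`. -/
def dirOf {m₁ m₂ n : ℕ} (c c' : Fin n → Cell m₁ m₂) (i : Fin n) : ℤ × ℤ :=
  (((c' i).1.val : ℤ) - ((c i).1.val : ℤ), ((c' i).2.val : ℤ) - ((c i).2.val : ℤ))

/-- One synchronous time step of the generalized sliding-tile puzzle: every tile stays or
moves to an adjacent cell, no meet collisions, no head-on collisions, and the
corner-following constraint holds. -/
structure GstpStep (m₁ m₂ n : ℕ) (c c' : Fin n → Cell m₁ m₂) : Prop where
  start_inj : Function.Injective c
  end_inj : Function.Injective c'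
  move : ∀ i, manhattan (c i) (c' i) ≤ 1
  no_swap : ∀ i j, i ≠ j → ¬(c' i = c j ∧ c' j = c i)
  cfc : ∀ i j, i ≠ j → c' i = c j → c' i ≠ c i →
    (dirOf c c' i).1 * (dirOf c c' j).1 + (dirOf c c' i).2 * (dirOf c c' j).2 ≠ 0

/-- The GSTP instance with start `s` and goal `g` is solvable within `T` time steps. -/
def SolvableIn (m₁ m₂ n T : ℕ) (s g : Fin n → Cell m₁ m₂) : Prop :=
  ∃ T' ≤ T, ∃ c : ℕ → Fin n → Cell m₁ m₂, c 0 = s ∧ c T' = g ∧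
    ∀ t < T', GstpStep m₁ m₂ n (c t) (c (t + 1))

lemma cell_eq_iff {m₁ m₂ : ℕ} {p q : Cell m₁ m₂} :
    p = q ↔ ((p.1.val : ℤ) = q.1.val ∧ (p.2.val : ℤ) = q.2.val) := by
  constructor
  · rintro rfl; exact ⟨rfl, rfl⟩
  · rintro ⟨h1, h2⟩
    exact Prod.ext (Fin.ext (by exact_mod_cast h1)) (Fin.ext (by exact_mod_cast h2))

lemma manhattan_triangle {m₁ m₂ : ℕ} (p q r : Cell m₁ m₂) :
    manhattan p r ≤ manhattan p q + manhattan q r := by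
  simp only [manhattan]
  have h1 := Int.natAbs_add_le ((p.1.val : ℤ) - q.1.val) ((q.1.val : ℤ) - r.1.val)
  have h2 := Int.natAbs_add_le ((p.2.val : ℤ) - q.2.val) ((q.2.val : ℤ) - r.2.val)
  omega

section step
variable {m₁ m₂ n : ℕ} {c c' : Fin n → Cell m₁ m₂} (h : GstpStep m₁ m₂ n c c')
include h

/-- Moving tiles have unit direction vectors. -/
lemma unit_dir {i : Fin n} (hi : c' i ≠ c i) :
    ((dirOf c c' i).1 = 0 ∧ ((dirOf c c' i).2 = 1 ∨ (dirOf c c' i).2 = -1)) ∨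
    ((dirOf c c' i).2 = 0 ∧ ((dirOf c c' i).1 = 1 ∨ (dirOf c c' i).1 = -1)) := by
  have hm := h.move i
  have hne : ¬(((c' i).1.val : ℤ) = (c i).1.val ∧ ((c' i).2.val : ℤ) = (c i).2.val) := by
    intro hh; exact hi (cell_eq_iff.2 hh)
  simp only [manhattan] at hm
  simp only [dirOf]
  omega

/-- If tile `i` moves into the old cell of tile `j`, then `j` also moves, in the
same direction. -/
lemma same_dir {i j : Fin n} (hij : i ≠ j) (hmove : c' i ≠ c i) (hin : c' i = c j) :
    c' j ≠ c j ∧ dirOf c c' j = dirOf c c' i := by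
  have hjm : c' j ≠ c j := by
    intro hj
    exact hij (h.end_inj (hin.trans hj.symm))
  refine ⟨hjm, ?_⟩
  have hdot := h.cfc i j hij hin hmove
  have hui := unit_dir h hmove
  have huj := unit_dir h hjm
  -- position relations
  have hpos1 : ((c' i).1.val : ℤ) = (c j).1.val := (cell_eq_iff.1 hin).1
  have hpos2 : ((c' i).2.val : ℤ) = (c j).2.val := (cell_eq_iff.1 hin).2
  -- rule out the opposite-direction (swap) case
  have hnsw := h.no_swap i j hij
  have hswap : ¬((((c' j).1.val : ℤ) = (c i).1.val) ∧ (((c' j).2.val : ℤ) = (c i).2.val)) := by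
    intro hh
    exact hnsw ⟨hin, cell_eq_iff.2 hh⟩
  simp only [dirOf] at hdot hui huj ⊢
  rcases hui with ⟨h1, h2 | h2⟩ | ⟨h1, h2 | h2⟩ <;>
    rcases huj with ⟨h3, h4 | h4⟩ | ⟨h3, h4 | h4⟩ <;>
    · rw [h1, h2, h3, h4] at hdot
      rw [Prod.ext_iff]
      constructor <;> omega

/-- Every moving tile's chain of pushed tiles ends at an escort cell, lying on the
same line (row or column) as the tile, and the unique tile entering that escort
moves in the same direction. -/
lemma chain : ∀ N : ℕ, ∀ i : Fin n, c' i ≠ c i →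
    (m₁ : ℤ) + m₂ - (((c i).1.val : ℤ) * (dirOf c c' i).1 + ((c i).2.val : ℤ) * (dirOf c c' i).2) ≤ N →
    ∃ e : Cell m₁ m₂, (∀ j, c j ≠ e) ∧
      (∃ j, c' j = e ∧ c' j ≠ c j ∧ dirOf c c' j = dirOf c c' i) ∧
      ((dirOf c c' i).1 = 0 → (c i).1 = e.1) ∧ ((dirOf c c' i).1 ≠ 0 → (c i).2 = e.2) := by
  intro N
  induction N with
  | zero =>
    intro i hi hb
    exfalso
    have l1 := (c i).1.isLt
    have l2 := (c i).2.isLt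
    rcases unit_dir h hi with ⟨h1, h2 | h2⟩ | ⟨h1, h2 | h2⟩ <;>
      rw [h1, h2] at hb <;> omega
  | succ N ih =>
    intro i hi hb
    by_cases hocc : ∃ j, c j = c' i
    · obtain ⟨j, hj⟩ := hocc
      have hij : i ≠ j := by
        rintro rfl; exact hi hj.symm
      obtain ⟨hjm, hdj⟩ := same_dir h hij hi hj.symm
      have e1 : ((c j).1.val : ℤ) = (c' i).1.val := (cell_eq_iff.1 hj).1
      have e2 : ((c j).2.val : ℤ) = (c' i).2.val := (cell_eq_iff.1 hj).2
      have hbj : (m₁ : ℤ) + m₂ -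
          (((c j).1.val : ℤ) * (dirOf c c' j).1 + ((c j).2.val : ℤ) * (dirOf c c' j).2) ≤ N := by
        rw [hdj]
        rcases unit_dir h hi with ⟨h1, h2 | h2⟩ | ⟨h1, h2 | h2⟩ <;>
          rw [h1, h2] at hb ⊢ <;>
          simp only [dirOf] at h1 h2 <;> omega
      obtain ⟨e, he1, he2, he3, he4⟩ := ih j hjm hbj
      rw [hdj] at he3 he4
      refine ⟨e, he1, ?_, ?_, ?_⟩
      · obtain ⟨j', hj'1, hj'2, hj'3⟩ := he2
        exact ⟨j', hj'1, hj'2, hj'3.trans hdj⟩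
      · intro hd1
        have hje := he3 hd1
        simp only [dirOf] at hd1
        have hcij : (c i).1 = (c j).1 := Fin.ext (by omega)
        exact hcij.trans hje
      · intro hd1
        have hje := he4 hd1
        have hu := unit_dir h hi
        have h2 : (dirOf c c' i).2 = 0 := by tauto
        simp only [dirOf] at h2
        have hcij : (c i).2 = (c j).2 := Fin.ext (by omega)
        exact hcij.trans hje
    · push_neg at hocc
      refine ⟨c' i, hocc, ⟨i, rfl, hi, rfl⟩, ?_, ?_⟩
      · intro hd1
        simp only [dirOf] at hd1
        exact Fin.ext (by omega)
      · intro hd1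
        have hu := unit_dir h hi
        have h2 : (dirOf c c' i).2 = 0 := by tauto
        simp only [dirOf] at h2
        exact Fin.ext (by omega)

open Finset in
/-- In one GSTP step at most `k * max m₁ m₂` tiles move. -/
lemma moving_card {k : ℕ} (hesc : n + k = m₁ * m₂) :
    (Finset.univ.filter (fun i => c' i ≠ c i)).card ≤ k * max m₁ m₂ := by
  classical
  set M := Finset.univ.filter (fun i => c' i ≠ c i) with hM
  have hbound : ∀ i : Fin n, c' i ≠ c i →
      (m₁ : ℤ) + m₂ - (((c i).1.val : ℤ) * (dirOf c c' i).1
        + ((c i).2.val : ℤ) * (dirOf c c' i).2) ≤ (2 * (m₁ + m₂) : ℕ) := by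
    intro i hi
    have l1 := (c i).1.isLt
    have l2 := (c i).2.isLt
    rcases unit_dir h hi with ⟨h1, h2 | h2⟩ | ⟨h1, h2 | h2⟩ <;>
      rw [h1, h2] <;> push_cast <;> omega
  have hch := chain h (2 * (m₁ + m₂))
  set φ : Fin n → Cell m₁ m₂ := fun i =>
    if hi : c' i ≠ c i then (hch i hi (hbound i hi)).choose else c i with hφ
  set E := (Finset.image c Finset.univ)ᶜ with hE
  have hφE : ∀ i ∈ M, φ i ∈ E := by
    intro i hi
    rw [hM, Finset.mem_filter] at hi
    have spec := (hch i hi.2 (hbound i hi.2)).choose_spec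
    rw [hφ]; simp only [dif_pos hi.2]
    rw [hE, Finset.mem_compl, Finset.mem_image]
    rintro ⟨j, -, hj⟩
    exact spec.1 j hj
  have hcard := Finset.card_eq_sum_card_fiberwise hφE
  have hfib : ∀ e ∈ E, (M.filter fun i => φ i = e).card ≤ max m₁ m₂ := by
    intro e _
    set F := M.filter fun i => φ i = e with hF
    rcases F.eq_empty_or_nonempty with hFe | ⟨i₀, hi₀⟩
    · simp [hFe]
    · have hmem : ∀ i ∈ F, c' i ≠ c i ∧ φ i = e := by
        intro i hi
        rw [hF, Finset.mem_filter, hM, Finset.mem_filter] at hi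
        exact ⟨hi.1.2, hi.2⟩
      -- the unique tile j₀ entering e
      obtain ⟨hi₀m, hi₀e⟩ := hmem i₀ hi₀
      have spec₀ := (hch i₀ hi₀m (hbound i₀ hi₀m)).choose_spec
      rw [hφ] at hi₀e; simp only [dif_pos hi₀m] at hi₀e
      obtain ⟨j₀, hj₀e, hj₀m, hj₀d⟩ := spec₀.2.1
      rw [hi₀e] at hj₀e
      -- every tile of the fiber moves in direction `dirOf j₀`
      have hdir : ∀ i ∈ F, dirOf c c' i = dirOf c c' j₀ := by
        intro i hi
        obtain ⟨him, hie⟩ := hmem i hi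
        have spec := (hch i him (hbound i him)).choose_spec
        rw [hφ] at hie; simp only [dif_pos him] at hie
        obtain ⟨j, hje, hjm, hjd⟩ := spec.2.1
        rw [hie] at hje
        have : j = j₀ := h.end_inj (hje.trans hj₀e.symm)
        rw [← hjd, this]
      have hline : ∀ i ∈ F,
          ((dirOf c c' j₀).1 = 0 → (c i).1 = e.1) ∧
          ((dirOf c c' j₀).1 ≠ 0 → (c i).2 = e.2) := by
        intro i hi
        obtain ⟨him, hie⟩ := hmem i hi
        have spec := (hch i him (hbound i him)).choose_spec
        rw [hφ] at hie; simp only [dif_pos him] at hie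
        rw [hie, hdir i hi] at spec
        exact ⟨spec.2.2.1, spec.2.2.2⟩
      by_cases hd : (dirOf c c' j₀).1 = 0
      · calc F.card ≤ (Finset.univ : Finset (Fin m₂)).card := by
              apply Finset.card_le_card_of_injOn (fun i => (c i).2)
                (fun _ _ => Finset.mem_univ _)
              intro a ha b hb hab
              have h1 : (c a).1 = e.1 := (hline a ha).1 hd
              have h2 : (c b).1 = e.1 := (hline b hb).1 hd
              exact h.start_inj (Prod.ext (h1.trans h2.symm) hab)
          _ ≤ max m₁ m₂ := by simp [le_max_right]
      · calc F.card ≤ (Finset.univ : Finset (Fin m₁)).card := by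
              apply Finset.card_le_card_of_injOn (fun i => (c i).1)
                (fun _ _ => Finset.mem_univ _)
              intro a ha b hb hab
              have h1 : (c a).2 = e.2 := (hline a ha).2 hd
              have h2 : (c b).2 = e.2 := (hline b hb).2 hd
              exact h.start_inj (Prod.ext hab (h1.trans h2.symm))
          _ ≤ max m₁ m₂ := by simp [le_max_left]
  have hEcard : E.card = k := by
    rw [hE, Finset.card_compl, Finset.card_image_of_injective _ h.start_inj]
    simp only [Finset.card_univ, Fintype.card_prod, Fintype.card_fin]
    omega
  calc M.card = ∑ e ∈ E, (M.filter fun i => φ i = e).card := hcard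
    _ ≤ ∑ e ∈ E, max m₁ m₂ := Finset.sum_le_sum hfib
    _ = E.card * max m₁ m₂ := by rw [Finset.sum_const, smul_eq_mul]
    _ = k * max m₁ m₂ := by rw [hEcard]
end step

lemma manhattan_self {m₁ m₂ : ℕ} (p : Cell m₁ m₂) : manhattan p p = 0 := by
  simp [manhattan]

/-- The total distance moved in one step is at most `k * max m₁ m₂`. -/
lemma step_sum {m₁ m₂ n k : ℕ} {c c' : Fin n → Cell m₁ m₂} (h : GstpStep m₁ m₂ n c c')
    (hesc : n + k = m₁ * m₂) :
    ∑ i, manhattan (c i) (c' i) ≤ k * max m₁ m₂ := by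
  classical
  rw [← Finset.sum_filter_add_sum_filter_not Finset.univ (fun i => c' i ≠ c i)]
  have h2 : ∑ i ∈ Finset.univ.filter (fun i => ¬c' i ≠ c i), manhattan (c i) (c' i) = 0 := by
    apply Finset.sum_eq_zero
    intro i hi
    rw [Finset.mem_filter, not_not] at hi
    rw [hi.2, manhattan_self]
  rw [h2, add_zero]
  calc ∑ i ∈ Finset.univ.filter (fun i => c' i ≠ c i), manhattan (c i) (c' i)
      ≤ ∑ i ∈ Finset.univ.filter (fun i => c' i ≠ c i), 1 :=
        Finset.sum_le_sum (fun i _ => h.move i)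
    _ = (Finset.univ.filter (fun i => c' i ≠ c i)).card := by rw [Finset.sum_const, smul_eq_mul, mul_one]
    _ ≤ k * max m₁ m₂ := moving_card h hesc

/-- If `T` GSTP time steps transform the start configuration into the goal
configuration on an `m₁ × m₂` grid with `k` escorts, then `T ≥ S / (k * max m₁ m₂)`,
where `S` is the total Manhattan distance between start and goal positions. -/
theorem gstp_makespan_lower_bound
    (m₁ m₂ n k T : ℕ) (hm₁ : 1 ≤ m₁) (hm₂ : 1 ≤ m₂) (hk : 1 ≤ k)
    (hesc : n + k = m₁ * m₂)
    (s g : Fin n → Cell m₁ m₂) (c : ℕ → Fin n → Cell m₁ m₂)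
    (h0 : c 0 = s) (hT : c T = g)
    (hstep : ∀ t < T, GstpStep m₁ m₂ n (c t) (c (t + 1))) :
    (∑ i, (manhattan (s i) (g i) : ℚ)) / ((k : ℚ) * (max m₁ m₂ : ℕ)) ≤ T := by
  set K := k * max m₁ m₂ with hK
  set S : ℕ → ℕ := fun t => ∑ i, manhattan (c t i) (g i) with hS
  have hstep' : ∀ t < T, S t ≤ S (t + 1) + K := by
    intro t ht
    calc S t ≤ ∑ i, (manhattan (c t i) (c (t+1) i) + manhattan (c (t+1) i) (g i)) :=
          Finset.sum_le_sum (fun i _ => manhattan_triangle _ _ _)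
      _ = (∑ i, manhattan (c t i) (c (t+1) i)) + S (t + 1) := Finset.sum_add_distrib
      _ ≤ K + S (t + 1) := by
          exact add_le_add_left (step_sum (hstep t ht) hesc) _
      _ = S (t + 1) + K := add_comm _ _
  have key : ∀ t, t ≤ T → S (T - t) ≤ t * K := by
    intro t
    induction t with
    | zero => intro _; simp [hS, hT, manhattan_self]
    | succ t ih =>
      intro ht
      have h1 : T - (t + 1) < T := by omega
      have h2 : T - (t + 1) + 1 = T - t := by omega
      calc S (T - (t + 1)) ≤ S (T - (t + 1) + 1) + K := hstep' _ h1
        _ = S (T - t) + K := by rw [h2]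
        _ ≤ t * K + K := add_le_add_left (ih (by omega)) _
        _ = (t + 1) * K := by ring
  have hS0 : S 0 ≤ T * K := by simpa using key T le_rfl
  simp only [hS, h0] at hS0
  have hKpos : (0 : ℚ) < (k : ℚ) * (max m₁ m₂ : ℕ) := by
    have : 1 ≤ max m₁ m₂ := le_trans hm₁ (le_max_left _ _)
    positivity
  rw [div_le_iff₀ hKpos]
  have : ((∑ i, manhattan (s i) (g i) : ℕ) : ℚ) ≤ ((T * K : ℕ) : ℚ) := by exact_mod_cast hS0
  rw [hK] at this
  push_cast at this ⊢
  linarith
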